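/- arXiv:math-ph/9907009 — 3 statements merged into one kernel-verified Lean document; each statement's English description precedes it below -/
import Mathlib

section
/- For real λ, μ > 0 with λ ≠ μ, the L² inner product ⟨G_λ, G_μ⟩ = ∫_{ℝ³} G_λ(x) G_μ(x) dx equals 1/(4π(√λ + √μ)). -/
open MeasureTheory Real Set

noncomputable abbrev E3 := EuclideanSpace ℝ (Fin 3)

/-- Yukawa potential `G_λ`. -/
noncomputable def G (lam : ℝ) (x : E3) : ℝ :=
  Real.exp (-Real.sqrt lam * ‖x‖) / (4 * π * ‖x‖)

lemma exp_int (c : ℝ) (hc : 0 < c) :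
    ∫ r in Ioi (0:ℝ), Real.exp (-(c*r)) = 1/c := by
  have h := integral_comp_mul_left_Ioi (fun x => Real.exp (-x)) 0 hc
  simp only [mul_zero, integral_exp_neg_Ioi_zero, smul_eq_mul, mul_one] at h
  rw [h]
  · ring
theorem stmt_1 (lam mu : ℝ) (hlam : 0 < lam) (hmu : 0 < mu) (hne : lam ≠ mu) :
    ∫ x : E3, G lam x * G mu x =
      1 / (4 * π * (Real.sqrt lam + Real.sqrt mu)) := by
  set a := Real.sqrt lam
  set b := Real.sqrt mu
  have hab : 0 < a + b := by positivity
  have key : ∫ x : E3, G lam x * G mu x =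
      ∫ x : E3, (fun r : ℝ => Real.exp (-a*r) * Real.exp (-b*r) / (16 * π^2 * r^2)) ‖x‖ := by
    congr 1; ext x
    simp only [G]
    ring
  rw [key, integral_fun_norm_addHaar volume
    (fun r : ℝ => Real.exp (-a*r) * Real.exp (-b*r) / (16 * π^2 * r^2))]
  have hdim : Module.finrank ℝ E3 = 3 := by simp
  have hball : (volume (Metric.ball (0 : E3) 1)).toReal = 4 * π / 3 := by
    rw [EuclideanSpace.volume_ball]
    simp only [Fintype.card_fin, one_pow, ENNReal.ofReal_one, one_mul]
    rw [ENNReal.toReal_ofReal (by positivity)]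
    rw [show ((3:ℕ):ℝ)/2 + 1 = 5/2 by norm_num]
    rw [show (5:ℝ)/2 = 3/2 + 1 by norm_num, Real.Gamma_add_one (by norm_num),
      show (3:ℝ)/2 = 1/2 + 1 by norm_num, Real.Gamma_add_one (by norm_num),
      Real.Gamma_one_half_eq]
    rw [show Real.sqrt π ^ 3 = π * Real.sqrt π by
      rw [pow_succ, pow_two, Real.mul_self_sqrt pi_pos.le]]
    field_simp
    ring
  have hIoi : ∫ y in Ioi (0:ℝ),
      y ^ (Module.finrank ℝ E3 - 1) • (Real.exp (-a*y) * Real.exp (-b*y) / (16 * π^2 * y^2))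
      = 1 / (16 * π^2 * (a+b)) := by
    rw [setIntegral_congr_fun measurableSet_Ioi
      (g := fun y => (1/(16*π^2)) * Real.exp (-((a+b)*y)))]
    · rw [integral_const_mul, exp_int _ hab]
      field_simp
    · intro y hy
      have hy0 : (0:ℝ) < y := hy
      simp only [hdim, smul_eq_mul]
      rw [show -((a+b)*y) = -a*y + -b*y by ring, Real.exp_add]
      field_simp
  rw [hIoi, measureReal_def, hball, hdim]
  have hπ : (0:ℝ) < π := pi_pos
  simp only [smul_eq_mul, nsmul_eq_mul, Nat.cast_ofNat]
  field_simp
  ring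
end

section
/- Let ρ be a spherically symmetric probability density on ℝ³ with bounded support, ρ_r(x) = r^{-3}ρ(x/r), and m_r := m - (8πe²/(3c²)) E(ρ_r) the renormalized mass. Then lim_{r→0} ⟨(-Δ+λ)^{-1}ρ_r, ρ_r⟩ / m_r = -3c²/(8πe²) for every λ > 0. -/
open MeasureTheory Real Filter

/-- Coulomb energy of a density on ℝ³. -/
noncomputable def coulombEnergy (ρ : E3 → ℝ) : ℝ :=
  (1 / (4 * π)) * ∫ x : E3, ∫ y : E3, ρ x * ρ y / ‖x - y‖

/-- Scaled density `ρ_r(x) = r⁻³ ρ(x/r)`. -/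
noncomputable def scaled (ρ : E3 → ℝ) (r : ℝ) (x : E3) : ℝ :=
  r ^ (-3 : ℤ) * ρ (r⁻¹ • x)

/-- `⟨(-Δ+λ)⁻¹ ρ_r, ρ_r⟩` expressed via the Yukawa kernel. -/
noncomputable def yukawaPairing (ρ : E3 → ℝ) (lam r : ℝ) : ℝ :=
  ∫ x : E3, ∫ y : E3, scaled ρ r x * G lam (x - y) * scaled ρ r y

/-- Renormalized mass `m_r = m - (8πe²/(3c²)) E(ρ_r)`. -/
noncomputable def m_r (ρ : E3 → ℝ) (m c e r : ℝ) : ℝ :=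
  m - (8 * π * e ^ 2 / (3 * c ^ 2)) * coulombEnergy (scaled ρ r)

lemma scale_int (f : E3 → ℝ) {r : ℝ} (hr : 0 < r) :
    ∫ x : E3, f x = r ^ 3 * ∫ x : E3, f (r • x) := by
  rw [MeasureTheory.Measure.integral_comp_smul_of_nonneg (volume) f r (hR := hr.le),
    finrank_euclideanSpace_fin, smul_eq_mul]
  field_simp

lemma scaled_smul (ρ : E3 → ℝ) {r : ℝ} (hr : 0 < r) (u : E3) :
    scaled ρ r (r • u) = (r ^ 3)⁻¹ * ρ u := by
  unfold scaled
  rw [inv_smul_smul₀ hr.ne', zpow_neg]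
  norm_num

lemma scale_double (ρ : E3 → ℝ) (k : ℝ → ℝ) {r : ℝ} (hr : 0 < r) :
    (∫ x : E3, ∫ y : E3, scaled ρ r x * k ‖x - y‖ * scaled ρ r y)
      = ∫ x : E3, ∫ y : E3, ρ x * k (r * ‖x - y‖) * ρ y := by
  have hA : (r : ℝ) ^ 3 ≠ 0 := pow_ne_zero _ hr.ne'
  have hinner : ∀ u : E3,
      (∫ y : E3, scaled ρ r (r • u) * k ‖r • u - y‖ * scaled ρ r y)
        = (r ^ 3)⁻¹ * ∫ y : E3, ρ u * k (r * ‖u - y‖) * ρ y := by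
    intro u
    rw [scale_int (fun y => scaled ρ r (r • u) * k ‖r • u - y‖ * scaled ρ r y) hr]
    have h2 : ∀ v : E3, scaled ρ r (r • u) * k ‖r • u - r • v‖ * scaled ρ r (r • v)
        = ((r ^ 3)⁻¹ * (r ^ 3)⁻¹) * (ρ u * k (r * ‖u - v‖) * ρ v) := by
      intro v
      rw [scaled_smul ρ hr, scaled_smul ρ hr, ← smul_sub, norm_smul,
        Real.norm_eq_abs, abs_of_pos hr]
      ring
    simp only [h2]
    rw [integral_const_mul]
    field_simp
  calc (∫ x : E3, ∫ y : E3, scaled ρ r x * k ‖x - y‖ * scaled ρ r y)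
      = r ^ 3 * ∫ u : E3, ∫ y : E3, scaled ρ r (r • u) * k ‖r • u - y‖ * scaled ρ r y :=
        scale_int (fun x => ∫ y : E3, scaled ρ r x * k ‖x - y‖ * scaled ρ r y) hr
    _ = r ^ 3 * ∫ u : E3, (r ^ 3)⁻¹ * ∫ y : E3, ρ u * k (r * ‖u - y‖) * ρ y := by
        simp only [hinner]
    _ = ∫ x : E3, ∫ y : E3, ρ x * k (r * ‖x - y‖) * ρ y := by
        rw [integral_const_mul, mul_inv_cancel_left₀ hA]

lemma coulomb_scale (ρ : E3 → ℝ) {r : ℝ} (hr : 0 < r) :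
    coulombEnergy (scaled ρ r) = r⁻¹ * coulombEnergy ρ := by
  have h := scale_double ρ (fun s => s⁻¹) hr
  unfold coulombEnergy
  have e1 : (∫ x : E3, ∫ y : E3, scaled ρ r x * scaled ρ r y / ‖x - y‖)
      = ∫ x : E3, ∫ y : E3, scaled ρ r x * ‖x - y‖⁻¹ * scaled ρ r y := by
    congr 1; funext x; congr 1; funext y; ring
  have e2 : (∫ x : E3, ∫ y : E3, ρ x * (r * ‖x - y‖)⁻¹ * ρ y)
      = r⁻¹ * ∫ x : E3, ∫ y : E3, ρ x * ρ y / ‖x - y‖ := by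
    have h3 : ∀ x : E3, (∫ y : E3, ρ x * (r * ‖x - y‖)⁻¹ * ρ y)
        = r⁻¹ * ∫ y : E3, ρ x * ρ y / ‖x - y‖ := by
      intro x
      rw [← integral_const_mul]
      congr 1; funext y
      rw [mul_inv]
      ring
    simp only [h3]
    rw [integral_const_mul]
  rw [e1, h, e2]
  ring

lemma yukawa_scale (ρ : E3 → ℝ) (lam : ℝ) {r : ℝ} (hr : 0 < r) :
    yukawaPairing ρ lam r
      = r⁻¹ * ∫ x : E3, ∫ y : E3,
          ρ x * ρ y * (Real.exp (-Real.sqrt lam * (r * ‖x - y‖)) / (4 * π * ‖x - y‖)) := by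
  have h := scale_double ρ (fun s => Real.exp (-Real.sqrt lam * s) / (4 * π * s)) hr
  unfold yukawaPairing G
  rw [h]
  have h3 : ∀ x : E3, (∫ y : E3,
        ρ x * (Real.exp (-Real.sqrt lam * (r * ‖x - y‖)) / (4 * π * (r * ‖x - y‖))) * ρ y)
      = r⁻¹ * ∫ y : E3,
          ρ x * ρ y * (Real.exp (-Real.sqrt lam * (r * ‖x - y‖)) / (4 * π * ‖x - y‖)) := by
    intro x
    rw [← integral_const_mul]
    congr 1; funext y
    rcases eq_or_ne ‖x - y‖ 0 with h0 | h0
    · simp [h0]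
    · field_simp
  simp only [h3]
  rw [integral_const_mul]

theorem stmt_5 (ρ : E3 → ℝ) (m c e lam : ℝ)
    (hm : 0 < m) (hc : 0 < c) (he : 0 < e) (hlam : 0 < lam)
    (hmeas : Measurable ρ) (hpos : ∀ x, 0 ≤ ρ x)
    (hprob : ∫ x : E3, ρ x = 1)
    (hsymm : ∀ x y : E3, ‖x‖ = ‖y‖ → ρ x = ρ y)
    (hsupp : HasCompactSupport ρ)
    (hfin : Integrable (fun p : E3 × E3 => ρ p.1 * ρ p.2 / ‖p.1 - p.2‖))
    (hEpos : 0 < coulombEnergy ρ) :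
    Tendsto (fun r => yukawaPairing ρ lam r / m_r ρ m c e r)
      (nhdsWithin 0 (Set.Ioi 0))
      (nhds (-(3 * c ^ 2) / (8 * π * e ^ 2))) := by
  set FF : ℝ → (E3 × E3) → ℝ := fun r p =>
    ρ p.1 * ρ p.2 * (Real.exp (-Real.sqrt lam * (r * ‖p.1 - p.2‖)) / (4 * π * ‖p.1 - p.2‖))
    with hFF
  have hnorm : Measurable fun p : E3 × E3 => ‖p.1 - p.2‖ :=
    (measurable_fst.sub measurable_snd).norm
  have hFm : ∀ r : ℝ, AEStronglyMeasurable (FF r) volume := by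
    intro r
    apply Measurable.aestronglyMeasurable
    exact ((hmeas.comp measurable_fst).mul (hmeas.comp measurable_snd)).mul
      ((Real.measurable_exp.comp (measurable_const.mul (measurable_const.mul hnorm))).div
        (measurable_const.mul hnorm))
  have hbound : ∀ r : ℝ, 0 ≤ r → ∀ p : E3 × E3,
      ‖FF r p‖ ≤ ρ p.1 * ρ p.2 / ‖p.1 - p.2‖ := by
    intro r hr p
    have hs0 : (0:ℝ) ≤ ‖p.1 - p.2‖ := norm_nonneg _
    have ha := hpos p.1
    have hb := hpos p.2
    have hπ := Real.pi_gt_three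
    rcases eq_or_lt_of_le hs0 with h0 | h0
    · simp [hFF, ← h0]
    · rw [Real.norm_eq_abs, abs_of_nonneg (by positivity)]
      have he1 : Real.exp (-Real.sqrt lam * (r * ‖p.1 - p.2‖)) ≤ 1 := by
        apply Real.exp_le_one_iff.mpr
        have h1 : 0 ≤ Real.sqrt lam := Real.sqrt_nonneg _
        have h2 : 0 ≤ r * ‖p.1 - p.2‖ := by positivity
        nlinarith
      calc ρ p.1 * ρ p.2 * (Real.exp (-Real.sqrt lam * (r * ‖p.1 - p.2‖)) / (4 * π * ‖p.1 - p.2‖))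
          ≤ ρ p.1 * ρ p.2 * (1 / (4 * π * ‖p.1 - p.2‖)) := by
            gcongr
        _ ≤ ρ p.1 * ρ p.2 / ‖p.1 - p.2‖ := by
            rw [mul_one_div]
            gcongr
            nlinarith
  have hFFint : ∀ r : ℝ, 0 ≤ r → Integrable (FF r) volume := fun r hr =>
    hfin.mono' (hFm r) (ae_of_all _ fun p => hbound r hr p)
  have hlim : ∀ p : E3 × E3, Tendsto (fun r => FF r p) (nhdsWithin 0 (Set.Ioi 0))
      (nhds (ρ p.1 * ρ p.2 * (1 / (4 * π * ‖p.1 - p.2‖)))) := by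
    intro p
    have hcont : Continuous fun r : ℝ => FF r p := by
      apply Continuous.mul continuous_const
      apply Continuous.div_const
      exact Real.continuous_exp.comp (continuous_const.mul (continuous_id.mul continuous_const))
    have h0 : Tendsto (fun r => FF r p) (nhdsWithin 0 (Set.Ioi 0)) (nhds (FF 0 p)) :=
      (hcont.tendsto 0).mono_left nhdsWithin_le_nhds
    simpa [hFF] using h0
  have hEint : (∫ p : E3 × E3, ρ p.1 * ρ p.2 * (1 / (4 * π * ‖p.1 - p.2‖)))
      = coulombEnergy ρ := by
    have e1 : ∀ p : E3 × E3, ρ p.1 * ρ p.2 * (1 / (4 * π * ‖p.1 - p.2‖))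
        = (1 / (4 * π)) * (ρ p.1 * ρ p.2 / ‖p.1 - p.2‖) := by
      intro p
      rcases eq_or_ne ‖p.1 - p.2‖ 0 with h | h
      · simp [h]
      · have hπ : π ≠ 0 := Real.pi_ne_zero
        field_simp
    simp only [e1]
    rw [integral_const_mul, coulombEnergy]
    congr 1
    rw [MeasureTheory.Measure.volume_eq_prod E3 E3]
    exact (MeasureTheory.integral_integral (f := fun x y => ρ x * ρ y / ‖x - y‖)
      (by rw [← MeasureTheory.Measure.volume_eq_prod E3 E3]; exact hfin)).symm
  have hFtend : Tendsto (fun r => ∫ p : E3 × E3, FF r p) (nhdsWithin 0 (Set.Ioi 0))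
      (nhds (coulombEnergy ρ)) := by
    rw [← hEint]
    apply MeasureTheory.tendsto_integral_filter_of_dominated_convergence
      (bound := fun p : E3 × E3 => ρ p.1 * ρ p.2 / ‖p.1 - p.2‖)
    · exact Eventually.of_forall fun r => hFm r
    · filter_upwards [self_mem_nhdsWithin] with r hr
      exact ae_of_all _ fun p => hbound r (le_of_lt hr) p
    · exact hfin
    · exact ae_of_all _ fun p => hlim p
  have hiter : ∀ r : ℝ, 0 < r →
      yukawaPairing ρ lam r = r⁻¹ * ∫ p : E3 × E3, FF r p := by
    intro r hr
    rw [yukawa_scale ρ lam hr]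
    congr 1
    rw [MeasureTheory.Measure.volume_eq_prod E3 E3]
    exact MeasureTheory.integral_integral
      (f := fun x y => ρ x * ρ y * (Real.exp (-Real.sqrt lam * (r * ‖x - y‖)) / (4 * π * ‖x - y‖)))
      (by rw [← MeasureTheory.Measure.volume_eq_prod E3 E3]; exact hFFint r hr.le)
  have hden : Tendsto (fun r : ℝ => r * m - 8 * π * e ^ 2 / (3 * c ^ 2) * coulombEnergy ρ)
      (nhdsWithin 0 (Set.Ioi 0))
      (nhds (0 * m - 8 * π * e ^ 2 / (3 * c ^ 2) * coulombEnergy ρ)) := by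
    apply Tendsto.mono_left _ nhdsWithin_le_nhds
    exact ((continuous_id.mul continuous_const).sub continuous_const).tendsto 0
  have hπ : (0:ℝ) < π := Real.pi_pos
  have hne : (0:ℝ) * m - 8 * π * e ^ 2 / (3 * c ^ 2) * coulombEnergy ρ ≠ 0 := by
    rw [zero_mul, zero_sub]
    have hpos' : 0 < 8 * π * e ^ 2 / (3 * c ^ 2) * coulombEnergy ρ := by positivity
    exact neg_ne_zero.mpr (ne_of_gt hpos')
  have hdiv := hFtend.div hden hne
  have hval : coulombEnergy ρ / (0 * m - 8 * π * e ^ 2 / (3 * c ^ 2) * coulombEnergy ρ)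
      = -(3 * c ^ 2) / (8 * π * e ^ 2) := by
    have hEne : coulombEnergy ρ ≠ 0 := hEpos.ne'
    have h8 : (8:ℝ) * π * e ^ 2 ≠ 0 := by positivity
    have h3 : (3:ℝ) * c ^ 2 ≠ 0 := by positivity
    rw [zero_mul, zero_sub, div_neg, neg_div]
    rw [neg_inj, div_eq_div_iff (by positivity) (by positivity)]
    field_simp
  rw [← hval]
  apply Tendsto.congr' _ hdiv
  filter_upwards [self_mem_nhdsWithin] with r hr
  have hr' : (0:ℝ) < r := hr
  show (∫ p : E3 × E3, FF r p) / (r * m - 8 * π * e ^ 2 / (3 * c ^ 2) * coulombEnergy ρ)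
      = yukawaPairing ρ lam r / m_r ρ m c e r
  have hm_r : m_r ρ m c e r
      = (r * m - 8 * π * e ^ 2 / (3 * c ^ 2) * coulombEnergy ρ) / r := by
    unfold m_r
    rw [coulomb_scale ρ hr']
    field_simp
  rw [hiter r hr', hm_r, div_div_eq_mul_div, mul_comm r⁻¹ (∫ p : E3 × E3, FF r p),
    mul_assoc (∫ p : E3 × E3, FF r p) r⁻¹ r, inv_mul_cancel₀ hr'.ne', mul_one]
end

section
/- Define Γ_r(λ) = -(m_r c²)/(4πe²) - (2/3)⟨(-Δ+λ)^{-1}ρ_r, ρ_r⟩ with the renormalized mass m_r = m - (8πe²/(3c²))E(ρ_r). Then for every λ > 0, Γ_r(λ) → Γ_m(λ) = -(mc²)/(4πe²) + √λ/(6π) as r → 0. -/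
open MeasureTheory Real Filter
open scoped Topology

/-- `Γ_r(λ) = -(m_r c²)/(4πe²) - (2/3)⟨(-Δ+λ)⁻¹ρ_r, ρ_r⟩`. -/
noncomputable def Gamma_r (ρ : E3 → ℝ) (m c e lam r : ℝ) : ℝ :=
  -(m_r ρ m c e r * c ^ 2) / (4 * π * e ^ 2) - (2 / 3) * yukawaPairing ρ lam r

/-- `Γ_m(λ) = -(mc²)/(4πe²) + √λ/(6π)`. -/
noncomputable def Gamma_m (m c e lam : ℝ) : ℝ :=
  -(m * c ^ 2) / (4 * π * e ^ 2) + Real.sqrt lam / (6 * π)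

lemma E3.integral_scale (h : E3 → ℝ) {r : ℝ} (hr : 0 < r) :
    ∫ x : E3, h x = r ^ 3 * ∫ u : E3, h (r • u) := by
  rw [Measure.integral_comp_smul volume h r, finrank_euclideanSpace_fin]
  rw [abs_of_pos (by positivity), smul_eq_mul, ← mul_assoc,
    mul_inv_cancel₀ (by positivity), one_mul]

lemma E3.double_scale (f : E3 → E3 → ℝ) {r : ℝ} (hr : 0 < r) :
    ∫ x : E3, ∫ y : E3, f x y
      = r ^ 3 * (r ^ 3 * ∫ u : E3, ∫ v : E3, f (r • u) (r • v)) := by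
  rw [E3.integral_scale (fun x => ∫ y, f x y) hr]
  congr 1
  have h1 : ∀ u : E3, ∫ y : E3, f (r • u) y = r ^ 3 * ∫ v : E3, f (r • u) (r • v) :=
    fun u => E3.integral_scale _ hr
  simp_rw [h1]
  rw [integral_const_mul]

/-- kernels after rescaling -/
noncomputable def Cker (ρ : E3 → ℝ) (r : ℝ) (p : E3 × E3) : ℝ :=
  ρ p.1 * ρ p.2 * (1 / (r * ‖p.1 - p.2‖))

noncomputable def Yker (ρ : E3 → ℝ) (lam r : ℝ) (p : E3 × E3) : ℝ :=
  ρ p.1 * ρ p.2 *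
    (Real.exp (-(Real.sqrt lam * (r * ‖p.1 - p.2‖))) / (r * ‖p.1 - p.2‖))

noncomputable def Fker (ρ : E3 → ℝ) (lam r : ℝ) (p : E3 × E3) : ℝ :=
  ρ p.1 * ρ p.2 *
    ((1 - Real.exp (-(Real.sqrt lam * (r * ‖p.1 - p.2‖)))) / (r * ‖p.1 - p.2‖))

section kernals
variable {ρ : E3 → ℝ} {lam r : ℝ}

lemma Cker_integrable (hfin : Integrable (fun p : E3 × E3 => ρ p.1 * ρ p.2 / ‖p.1 - p.2‖))
    (hr : 0 < r) : Integrable (Cker ρ r) := by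
  have h : Cker ρ r = fun p : E3 × E3 => r⁻¹ * (ρ p.1 * ρ p.2 / ‖p.1 - p.2‖) := by
    funext p; unfold Cker; ring
  rw [h]
  exact hfin.const_mul _

lemma Yker_integrable (hmeas : Measurable ρ) (hpos : ∀ x, 0 ≤ ρ x)
    (hfin : Integrable (fun p : E3 × E3 => ρ p.1 * ρ p.2 / ‖p.1 - p.2‖))
    (hlam : 0 < lam) (hr : 0 < r) : Integrable (Yker ρ lam r) := by
  have hd : Measurable fun p : E3 × E3 => ‖p.1 - p.2‖ :=
    (measurable_fst.sub measurable_snd).norm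
  have hmY : Measurable (Yker ρ lam r) := by
    apply ((hmeas.comp measurable_fst).mul (hmeas.comp measurable_snd)).mul
    exact (((hd.const_mul r).const_mul _).neg.exp).div (hd.const_mul r)
  refine (Cker_integrable hfin hr).mono' hmY.aestronglyMeasurable (ae_of_all _ fun p => ?_)
  have ht : 0 ≤ r * ‖p.1 - p.2‖ := by positivity
  have hnn : 0 ≤ Yker ρ lam r p :=
    mul_nonneg (mul_nonneg (hpos _) (hpos _)) (div_nonneg (Real.exp_nonneg _) ht)
  rw [Real.norm_eq_abs, abs_of_nonneg hnn]
  unfold Yker Cker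
  apply mul_le_mul_of_nonneg_left _ (mul_nonneg (hpos _) (hpos _))
  rcases ht.eq_or_lt with h0 | h0
  · rw [← h0]; simp
  · exact (div_le_div_iff_of_pos_right h0).mpr (Real.exp_le_one_iff.mpr (neg_nonpos.mpr (by positivity)))

lemma Cker_sub_Yker (hmeas : Measurable ρ) (hpos : ∀ x, 0 ≤ ρ x)
    (hfin : Integrable (fun p : E3 × E3 => ρ p.1 * ρ p.2 / ‖p.1 - p.2‖))
    (hlam : 0 < lam) (hr : 0 < r) :
    (∫ p : E3 × E3, Cker ρ r p) - (∫ p : E3 × E3, Yker ρ lam r p)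
      = ∫ p : E3 × E3, Fker ρ lam r p := by
  rw [← integral_sub (Cker_integrable hfin hr) (Yker_integrable hmeas hpos hfin hlam hr)]
  exact integral_congr_ae (ae_of_all _ fun p => by unfold Cker Yker Fker; ring)

lemma coulomb_scaled (hfin : Integrable (fun p : E3 × E3 => ρ p.1 * ρ p.2 / ‖p.1 - p.2‖))
    (hr : 0 < r) :
    coulombEnergy (scaled ρ r) = (1 / (4 * π)) * ∫ p : E3 × E3, Cker ρ r p := by
  have hsc : ∀ u : E3, scaled ρ r (r • u) = (r ^ 3)⁻¹ * ρ u := by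
    intro u
    unfold scaled
    rw [smul_smul, inv_mul_cancel₀ hr.ne', one_smul,
      show (r : ℝ) ^ (-3 : ℤ) = (r ^ 3)⁻¹ by rw [zpow_neg]; norm_cast]
  have hnr : ∀ u v : E3, ‖r • u - r • v‖ = r * ‖u - v‖ := by
    intro u v
    rw [← smul_sub, norm_smul, Real.norm_eq_abs, abs_of_pos hr]
  unfold coulombEnergy
  rw [show (∫ x : E3, ∫ y : E3, scaled ρ r x * scaled ρ r y / ‖x - y‖)
      = r ^ 3 * (r ^ 3 * ∫ u : E3, ∫ v : E3,
          scaled ρ r (r • u) * scaled ρ r (r • v) / ‖r • u - r • v‖)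
    from E3.double_scale _ hr]
  simp_rw [hsc, hnr]
  have hpt : ∀ u v : E3, (r ^ 3)⁻¹ * ρ u * ((r ^ 3)⁻¹ * ρ v) / (r * ‖u - v‖)
      = (r ^ 3)⁻¹ * ((r ^ 3)⁻¹ * (ρ u * ρ v * (1 / (r * ‖u - v‖)))) := fun u v => by ring
  simp_rw [hpt, integral_const_mul]
  have hint : Integrable (Function.uncurry fun u v : E3 => ρ u * ρ v * (1 / (r * ‖u - v‖)))
      (volume.prod volume) := by
    rw [← Measure.volume_eq_prod]; exact Cker_integrable hfin hr
  have hfub := integral_integral (f := fun u v : E3 => ρ u * ρ v * (1 / (r * ‖u - v‖))) hint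
  rw [← Measure.volume_eq_prod] at hfub
  rw [hfub]
  have hr3 : (r : ℝ) ^ 3 ≠ 0 := by positivity
  unfold Cker
  field_simp

lemma yukawa_scaled (hmeas : Measurable ρ) (hpos : ∀ x, 0 ≤ ρ x)
    (hfin : Integrable (fun p : E3 × E3 => ρ p.1 * ρ p.2 / ‖p.1 - p.2‖))
    (hlam : 0 < lam) (hr : 0 < r) :
    yukawaPairing ρ lam r = (1 / (4 * π)) * ∫ p : E3 × E3, Yker ρ lam r p := by
  have hsc : ∀ u : E3, scaled ρ r (r • u) = (r ^ 3)⁻¹ * ρ u := by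
    intro u
    unfold scaled
    rw [smul_smul, inv_mul_cancel₀ hr.ne', one_smul,
      show (r : ℝ) ^ (-3 : ℤ) = (r ^ 3)⁻¹ by rw [zpow_neg]; norm_cast]
  have hnr : ∀ u v : E3, ‖r • u - r • v‖ = r * ‖u - v‖ := by
    intro u v
    rw [← smul_sub, norm_smul, Real.norm_eq_abs, abs_of_pos hr]
  unfold yukawaPairing
  rw [show (∫ x : E3, ∫ y : E3, scaled ρ r x * G lam (x - y) * scaled ρ r y)
      = r ^ 3 * (r ^ 3 * ∫ u : E3, ∫ v : E3,
          scaled ρ r (r • u) * G lam (r • u - r • v) * scaled ρ r (r • v))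
    from E3.double_scale _ hr]
  have hG : ∀ u v : E3, G lam (r • u - r • v)
      = Real.exp (-(Real.sqrt lam * (r * ‖u - v‖))) / (4 * π * (r * ‖u - v‖)) := by
    intro u v; unfold G; rw [hnr, neg_mul]
  simp_rw [hsc, hG]
  have hpt : ∀ u v : E3,
      (r ^ 3)⁻¹ * ρ u * (Real.exp (-(Real.sqrt lam * (r * ‖u - v‖))) / (4 * π * (r * ‖u - v‖)))
          * ((r ^ 3)⁻¹ * ρ v)
      = (r ^ 3)⁻¹ * ((r ^ 3)⁻¹ * ((4 * π)⁻¹ *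
          (ρ u * ρ v * (Real.exp (-(Real.sqrt lam * (r * ‖u - v‖))) / (r * ‖u - v‖))))) :=
    fun u v => by ring
  simp_rw [hpt, integral_const_mul]
  have hint : Integrable (Function.uncurry fun u v : E3 =>
      ρ u * ρ v * (Real.exp (-(Real.sqrt lam * (r * ‖u - v‖))) / (r * ‖u - v‖)))
      (volume.prod volume) := by
    rw [← Measure.volume_eq_prod]; exact Yker_integrable hmeas hpos hfin hlam hr
  have hfub := integral_integral (f := fun u v : E3 =>
      ρ u * ρ v * (Real.exp (-(Real.sqrt lam * (r * ‖u - v‖))) / (r * ‖u - v‖))) hint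
  rw [← Measure.volume_eq_prod] at hfub
  rw [hfub]
  have hr3 : (r : ℝ) ^ 3 ≠ 0 := by positivity
  have hπ : (π : ℝ) ≠ 0 := Real.pi_ne_zero
  unfold Yker
  field_simp

end kernals

lemma E3.diag_null : (volume : Measure (E3 × E3)) {p : E3 × E3 | p.1 = p.2} = 0 := by
  have hm : MeasurableSet {p : E3 × E3 | p.1 = p.2} :=
    measurableSet_eq_fun measurable_fst measurable_snd
  rw [Measure.volume_eq_prod, Measure.prod_apply hm]
  have h : ∀ x : E3, (Prod.mk x ⁻¹' {p : E3 × E3 | p.1 = p.2}) = {x} := by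
    intro x; ext y; simp [eq_comm]
  simp [h]

lemma tendsto_one_sub_exp_div :
    Tendsto (fun s : ℝ => (1 - Real.exp (-s)) / s) (𝓝[≠] (0:ℝ)) (𝓝 1) := by
  have h : HasDerivAt (fun s : ℝ => Real.exp (-s)) (-1) 0 := by
    simpa using (hasDerivAt_neg (0:ℝ)).exp
  have h2 := hasDerivAt_iff_tendsto_slope.mp h
  have h3 : Tendsto (fun s : ℝ => -(slope (fun s : ℝ => Real.exp (-s)) 0 s)) (𝓝[≠] 0) (𝓝 1) := by
    simpa using h2.neg
  refine h3.congr fun s => ?_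
  rw [slope_def_field]
  simp only [neg_zero, Real.exp_zero, sub_zero]
  ring

lemma one_sub_exp_nonneg {s : ℝ} (hs : 0 ≤ s) : 0 ≤ 1 - Real.exp (-s) := by
  have h : Real.exp (-s) ≤ Real.exp 0 := Real.exp_le_exp.mpr (by linarith)
  simpa using h

lemma one_sub_exp_le {s : ℝ} : 1 - Real.exp (-s) ≤ s := by
  have := Real.add_one_le_exp (-s)
  linarith

lemma Fker_tendsto {ρ : E3 → ℝ} {lam : ℝ} (hmeas : Measurable ρ) (hpos : ∀ x, 0 ≤ ρ x)
    (hprob : ∫ x : E3, ρ x = 1) (hlam : 0 < lam) (hρint : Integrable ρ) :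
    Tendsto (fun r => ∫ p : E3 × E3, Fker ρ lam r p) (𝓝[>] (0:ℝ))
      (𝓝 (Real.sqrt lam)) := by
  have hsl : (0:ℝ) < Real.sqrt lam := Real.sqrt_pos.mpr hlam
  have hρρ : Integrable (fun p : E3 × E3 => ρ p.1 * ρ p.2) := by
    rw [Measure.volume_eq_prod]
    exact hρint.mul_prod hρint
  have hd : Measurable fun p : E3 × E3 => ‖p.1 - p.2‖ :=
    (measurable_fst.sub measurable_snd).norm
  have hlimval : (∫ p : E3 × E3, ρ p.1 * ρ p.2 * Real.sqrt lam) = Real.sqrt lam := by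
    rw [integral_mul_const, Measure.volume_eq_prod, integral_prod_mul, hprob]
    norm_num
  rw [← hlimval]
  apply tendsto_integral_filter_of_dominated_convergence
    (fun p : E3 × E3 => ρ p.1 * ρ p.2 * Real.sqrt lam)
  · apply Eventually.of_forall
    intro r
    apply Measurable.aestronglyMeasurable
    apply ((hmeas.comp measurable_fst).mul (hmeas.comp measurable_snd)).mul
    exact (measurable_const.sub (((hd.const_mul r).const_mul _).neg.exp)).div (hd.const_mul r)
  · filter_upwards [self_mem_nhdsWithin] with r hr
    rw [Set.mem_Ioi] at hr
    apply ae_of_all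
    intro p
    have ht : 0 ≤ r * ‖p.1 - p.2‖ := by positivity
    have h1 : 0 ≤ (1 - Real.exp (-(Real.sqrt lam * (r * ‖p.1 - p.2‖)))) / (r * ‖p.1 - p.2‖) :=
      div_nonneg (one_sub_exp_nonneg (by positivity)) ht
    have h2 : (1 - Real.exp (-(Real.sqrt lam * (r * ‖p.1 - p.2‖)))) / (r * ‖p.1 - p.2‖)
        ≤ Real.sqrt lam := by
      rcases ht.eq_or_lt with h0 | h0
      · rw [← h0, div_zero]; exact hsl.le
      · calc (1 - Real.exp (-(Real.sqrt lam * (r * ‖p.1 - p.2‖)))) / (r * ‖p.1 - p.2‖)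
            ≤ (Real.sqrt lam * (r * ‖p.1 - p.2‖)) / (r * ‖p.1 - p.2‖) :=
              (div_le_div_iff_of_pos_right h0).mpr one_sub_exp_le
          _ = Real.sqrt lam := mul_div_cancel_right₀ _ h0.ne'
    unfold Fker
    rw [Real.norm_eq_abs, abs_of_nonneg (mul_nonneg (mul_nonneg (hpos _) (hpos _)) h1)]
    exact mul_le_mul_of_nonneg_left h2 (mul_nonneg (hpos _) (hpos _))
  · exact hρρ.mul_const _
  · have hdiag : ∀ᵐ p : E3 × E3, p.1 ≠ p.2 := by
      rw [ae_iff]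
      simpa [not_not] using E3.diag_null
    filter_upwards [hdiag] with p hp
    have hd0 : 0 < ‖p.1 - p.2‖ := by
      rw [norm_pos_iff]
      exact sub_ne_zero.mpr hp
    set t := ‖p.1 - p.2‖ with htdef
    have hcomp : Tendsto (fun r : ℝ => Real.sqrt lam * (r * t)) (𝓝[>] 0) (𝓝[≠] 0) := by
      rw [tendsto_nhdsWithin_iff]
      constructor
      · have h0 : Tendsto (fun r : ℝ => Real.sqrt lam * (r * t)) (𝓝 0)
            (𝓝 (Real.sqrt lam * (0 * t))) := ((tendsto_id.mul_const t).const_mul _)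
        simpa using h0.mono_left nhdsWithin_le_nhds
      · filter_upwards [self_mem_nhdsWithin] with r hr
        rw [Set.mem_Ioi] at hr
        simp only [Set.mem_compl_iff, Set.mem_singleton_iff]
        exact (by positivity : (0:ℝ) < Real.sqrt lam * (r * t)).ne'
    have h1 := (tendsto_one_sub_exp_div.comp hcomp).const_mul (Real.sqrt lam)
    simp only [Function.comp_def] at h1
    have h3 : (fun r : ℝ => Real.sqrt lam *
        ((1 - Real.exp (-(Real.sqrt lam * (r * t)))) / (Real.sqrt lam * (r * t))))
        = fun r : ℝ => (1 - Real.exp (-(Real.sqrt lam * (r * t)))) / (r * t) := by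
      funext r
      rw [← mul_div_assoc, mul_div_mul_left _ _ hsl.ne']
    rw [h3, mul_one] at h1
    unfold Fker
    exact h1.const_mul _

theorem stmt_6 (ρ : E3 → ℝ) (m c e lam : ℝ)
    (hm : 0 < m) (hc : 0 < c) (he : 0 < e) (hlam : 0 < lam)
    (hmeas : Measurable ρ) (hpos : ∀ x, 0 ≤ ρ x)
    (hprob : ∫ x : E3, ρ x = 1)
    (hsymm : ∀ x y : E3, ‖x‖ = ‖y‖ → ρ x = ρ y)
    (hsupp : HasCompactSupport ρ)
    (hfin : Integrable (fun p : E3 × E3 => ρ p.1 * ρ p.2 / ‖p.1 - p.2‖)) :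
    Tendsto (fun r => Gamma_r ρ m c e lam r) (nhdsWithin 0 (Set.Ioi 0))
      (nhds (Gamma_m m c e lam)) := by
  have hπ : (0:ℝ) < π := Real.pi_pos
  have hπ' : (π:ℝ) ≠ 0 := hπ.ne'
  have hρint : Integrable ρ := by
    by_contra h
    rw [integral_undef h] at hprob
    norm_num at hprob
  have key : ∀ r ∈ Set.Ioi (0:ℝ),
      -(m * c ^ 2) / (4 * π * e ^ 2)
        + (2/3) * ((1/(4*π)) * ∫ p : E3 × E3, Fker ρ lam r p)
      = Gamma_r ρ m c e lam r := by
    intro r hr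
    rw [Set.mem_Ioi] at hr
    rw [Gamma_r, m_r, coulomb_scaled hfin hr, yukawa_scaled hmeas hpos hfin hlam hr,
      ← Cker_sub_Yker hmeas hpos hfin hlam hr]
    have he' : (e:ℝ) ≠ 0 := he.ne'
    have hc' : (c:ℝ) ≠ 0 := hc.ne'
    field_simp
    ring
  have hF := Fker_tendsto hmeas hpos hprob hlam hρint
  have hlim : Tendsto (fun r => -(m * c ^ 2) / (4 * π * e ^ 2)
      + (2/3) * ((1/(4*π)) * ∫ p : E3 × E3, Fker ρ lam r p)) (𝓝[>] (0:ℝ))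
      (𝓝 (Gamma_m m c e lam)) := by
    have hGm : Gamma_m m c e lam
        = -(m * c ^ 2) / (4 * π * e ^ 2) + (2/3) * ((1/(4*π)) * Real.sqrt lam) := by
      rw [Gamma_m]
      field_simp
      ring
    rw [hGm]
    exact tendsto_const_nhds.add ((hF.const_mul _).const_mul _)
  refine hlim.congr' ?_
  filter_upwards [self_mem_nhdsWithin] with r hr
  exact key r hr
end
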